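/- The Shapley value admits the closed-form linear-transformation expression: φ = ((d·I − J)/(d−1))·(U^T W v) + ((v(N) − v(∅))/d)·1, where 1 is the all-ones vector. -/

import Mathlib

open Finset Matrix

noncomputable def shapley (d : ℕ) (v : Finset (Fin d) → ℝ) (i : Fin d) : ℝ :=
  ∑ S ∈ (Finset.univ.erase i).powerset,
    ((S.card.factorial : ℝ) * ((d - S.card - 1).factorial : ℝ) / (d.factorial : ℝ)) *
      (v (insert i S) - v S)

/-- The Shapley kernel weight. -/
noncomputable def shapKernel (d : ℕ) (S : Finset (Fin d)) : ℝ :=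
  ((d : ℝ) - 1) / ((d.choose S.card : ℝ) * (S.card : ℝ) * ((d : ℝ) - (S.card : ℝ)))

/-- The indicator matrix `U`, with one row for each nonempty proper subset of `N`. -/
def indMat (d : ℕ) :
    Matrix {S : Finset (Fin d) // S.Nonempty ∧ S ≠ Finset.univ} (Fin d) ℝ :=
  fun S i => if i ∈ S.1 then 1 else 0

/-- The diagonal Shapley-kernel weight matrix `W`. -/
noncomputable def wMat (d : ℕ) :
    Matrix {S : Finset (Fin d) // S.Nonempty ∧ S ≠ Finset.univ}
      {S : Finset (Fin d) // S.Nonempty ∧ S ≠ Finset.univ} ℝ :=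
  Matrix.diagonal (fun S => shapKernel d S.1)

lemma arith_mem (d s : ℕ) (hd : 2 ≤ d) (h1 : 1 ≤ s) (h2 : s < d) :
    (((s-1).factorial : ℝ) * ((d - s).factorial : ℝ) / (d.factorial : ℝ))
      = (1/((d:ℝ)-1)) * ((((d:ℝ)) - (s:ℝ)) * (((d:ℝ)-1) / ((d.choose s : ℝ) * s * ((d:ℝ) - s)))) := by
  have hkey : ((d.choose s : ℝ)) * s.factorial * (d-s).factorial = d.factorial := by
    exact_mod_cast Nat.choose_mul_factorial_mul_factorial h2.le
  have hs : (s.factorial : ℝ) = s * (s-1).factorial := by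
    exact_mod_cast (Nat.mul_factorial_pred (by omega : s ≠ 0)).symm
  have h0 : (d.choose s : ℝ) ≠ 0 := by
    exact_mod_cast (Nat.choose_pos h2.le).ne'
  have h1' : (s : ℝ) ≠ 0 := by exact_mod_cast Nat.one_le_iff_ne_zero.mp h1
  have h2' : (d : ℝ) - s ≠ 0 := by
    have : (s:ℝ) < d := by exact_mod_cast h2
    linarith
  have h3' : (d : ℝ) - 1 ≠ 0 := by
    have : (2:ℝ) ≤ d := by exact_mod_cast hd
    linarith
  have hf : ((s-1).factorial : ℝ) ≠ 0 := by exact_mod_cast (Nat.factorial_pos _).ne'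
  have hf2 : ((d-s).factorial : ℝ) ≠ 0 := by exact_mod_cast (Nat.factorial_pos _).ne'
  have hfd : (d.factorial : ℝ) ≠ 0 := by exact_mod_cast (Nat.factorial_pos _).ne'
  rw [hs] at hkey
  field_simp
  nlinarith [hkey, sq_nonneg ((d:ℝ))]

lemma arith_nonmem (d s : ℕ) (hd : 2 ≤ d) (h1 : 1 ≤ s) (h2 : s < d) :
    -((s.factorial : ℝ) * ((d - s - 1).factorial : ℝ) / (d.factorial : ℝ))
      = (1/((d:ℝ)-1)) * ((0 - (s:ℝ)) * (((d:ℝ)-1) / ((d.choose s : ℝ) * s * ((d:ℝ) - s)))) := by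
  have hkey : ((d.choose s : ℝ)) * s.factorial * (d-s).factorial = d.factorial := by
    exact_mod_cast Nat.choose_mul_factorial_mul_factorial h2.le
  have hds : ((d-s).factorial : ℝ) = ((d-s : ℕ) : ℝ) * ((d-s-1).factorial : ℝ) := by
    exact_mod_cast (Nat.mul_factorial_pred (by omega)).symm
  have hcast : ((d - s : ℕ) : ℝ) = (d:ℝ) - s := by
    push_cast [Nat.cast_sub h2.le]; ring
  have h0 : (d.choose s : ℝ) ≠ 0 := by
    exact_mod_cast (Nat.choose_pos h2.le).ne'
  have h1' : (s : ℝ) ≠ 0 := by exact_mod_cast Nat.one_le_iff_ne_zero.mp h1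
  have h2' : (d : ℝ) - s ≠ 0 := by
    have : (s:ℝ) < d := by exact_mod_cast h2
    linarith
  have h3' : (d : ℝ) - 1 ≠ 0 := by
    have : (2:ℝ) ≤ d := by exact_mod_cast hd
    linarith
  have hf : ((s).factorial : ℝ) ≠ 0 := by exact_mod_cast (Nat.factorial_pos _).ne'
  have hf2 : ((d-s-1).factorial : ℝ) ≠ 0 := by exact_mod_cast (Nat.factorial_pos _).ne'
  have hfd : (d.factorial : ℝ) ≠ 0 := by exact_mod_cast (Nat.factorial_pos _).ne'
  rw [hds, hcast] at hkey
  field_simp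
  linear_combination (-(s:ℝ)) * hkey

lemma shapley_eq (d : ℕ) (v : Finset (Fin d) → ℝ) (i : Fin d) :
    shapley d v i = ∑ S : Finset (Fin d),
      (if i ∈ S then ((S.card - 1).factorial : ℝ) * ((d - S.card).factorial : ℝ) / (d.factorial : ℝ)
       else -((S.card.factorial : ℝ) * ((d - S.card - 1).factorial : ℝ) / (d.factorial : ℝ))) * v S := by
  have hset : Finset.univ.filter (fun S : Finset (Fin d) => i ∉ S) = (Finset.univ.erase i).powerset := by
    ext T; simp [Finset.subset_erase]
  have h1 : ∑ S ∈ (Finset.univ.erase i).powerset,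
      ((S.card.factorial : ℝ) * ((d - S.card - 1).factorial : ℝ) / (d.factorial : ℝ)) * v (insert i S)
      = ∑ T ∈ Finset.univ.filter (fun T : Finset (Fin d) => i ∈ T),
        (((T.card - 1).factorial : ℝ) * ((d - T.card).factorial : ℝ) / (d.factorial : ℝ)) * v T := by
    apply Finset.sum_nbij' (fun S => insert i S) (fun T => T.erase i)
    · intro S hS
      simp only [Finset.mem_powerset, Finset.subset_erase] at hS
      simp [Finset.mem_filter]
    · intro T hT
      simp only [Finset.mem_filter] at hT
      simp [Finset.mem_powerset, Finset.subset_erase, Finset.erase_subset_erase, Finset.subset_univ]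
    · intro S hS
      simp only [Finset.mem_powerset, Finset.subset_erase] at hS
      exact Finset.erase_insert hS.2
    · intro T hT
      simp only [Finset.mem_filter] at hT
      exact Finset.insert_erase hT.2
    · intro S hS
      simp only [Finset.mem_powerset, Finset.subset_erase] at hS
      rw [Finset.card_insert_of_notMem hS.2]
      congr 3 <;> omega
  rw [shapley]
  simp only [mul_sub]
  rw [Finset.sum_sub_distrib, h1, ← hset]
  rw [Finset.sum_filter, Finset.sum_filter, ← Finset.sum_sub_distrib]
  apply Finset.sum_congr rfl
  intro S _
  by_cases h : i ∈ S <;> simp [h]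

lemma uvec_eq (d : ℕ) (v : Finset (Fin d) → ℝ) (j : Fin d) :
    (((indMat d)ᵀ * wMat d).mulVec (fun S => v S.1)) j
      = ∑ S : Finset (Fin d),
          (if j ∈ S then (if S.Nonempty ∧ S ≠ Finset.univ then shapKernel d S else 0) else 0) * v S := by
  rw [Matrix.mulVec, dotProduct]
  have step1 : ∑ S : {S : Finset (Fin d) // S.Nonempty ∧ S ≠ Finset.univ},
      ((indMat d)ᵀ * wMat d) j S * v S.1
      = ∑ S : {S : Finset (Fin d) // S.Nonempty ∧ S ≠ Finset.univ},
        (if j ∈ S.1 then shapKernel d S.1 else 0) * v S.1 := by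
    apply Finset.sum_congr rfl
    intro S _
    rw [wMat, Matrix.mul_diagonal, Matrix.transpose_apply, indMat]
    by_cases h : j ∈ S.1 <;> simp [h]
  rw [step1, ← Finset.sum_subtype (Finset.univ.filter (fun S : Finset (Fin d) => S.Nonempty ∧ S ≠ Finset.univ))
      (by intro x; simp) (fun S => (if j ∈ S then shapKernel d S else 0) * v S)]
  rw [Finset.sum_filter]
  apply Finset.sum_congr rfl
  intro S _
  by_cases hP : S.Nonempty ∧ S ≠ Finset.univ <;> by_cases hj : j ∈ S <;> simp [hP, hj]

/-- closed-form expression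
`φ = ((d·I − J)/(d−1))·(Uᵀ W v) + ((v(N) − v(∅))/d)·1`. -/
theorem shapley_closed_form (d : ℕ) (hd : 2 ≤ d) (v : Finset (Fin d) → ℝ) :
    (fun i => shapley d v i) =
      (1 / ((d : ℝ) - 1)) •
        (((d : ℝ) • (1 : Matrix (Fin d) (Fin d) ℝ) - Matrix.of fun _ _ => (1 : ℝ)).mulVec
          (((indMat d)ᵀ * wMat d).mulVec (fun S => v S.1))) +
        (fun _ => (v Finset.univ - v ∅) / d) := by
  have hd0 : 0 < d := by omega
  funext i
  set K : Finset (Fin d) → ℝ :=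
    fun S => if S.Nonempty ∧ S ≠ Finset.univ then shapKernel d S else 0 with hK
  set u : Fin d → ℝ := ((indMat d)ᵀ * wMat d).mulVec (fun S => v S.1) with hu'
  have hu : ∀ j, u j = ∑ S : Finset (Fin d), (if j ∈ S then K S else 0) * v S :=
    fun j => uvec_eq d v j
  have hmv : (((d : ℝ) • (1 : Matrix (Fin d) (Fin d) ℝ) - Matrix.of fun _ _ => (1 : ℝ)).mulVec u) i
      = (d : ℝ) * u i - ∑ j, u j := by
    rw [Matrix.sub_mulVec, Matrix.smul_mulVec, Matrix.one_mulVec]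
    simp only [Pi.sub_apply, Pi.smul_apply, smul_eq_mul]
    congr 1
    rw [Matrix.mulVec, dotProduct]
    simp
  have hsumu : ∑ j, u j = ∑ S : Finset (Fin d), (S.card : ℝ) * (K S * v S) := by
    simp only [hu]
    rw [Finset.sum_comm]
    apply Finset.sum_congr rfl
    intro S _
    simp only [ite_mul, zero_mul]
    rw [Finset.sum_ite_mem, Finset.univ_inter, Finset.sum_const, nsmul_eq_mul]
  have hconst : (v Finset.univ - v ∅) / d
      = ∑ S : Finset (Fin d),
          (if S = Finset.univ then v S / d else if S = ∅ then -(v S) / d else 0) := by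
    have hne : (Finset.univ : Finset (Fin d)) ≠ ∅ := by
      simp [← Finset.nonempty_iff_ne_empty]
      exact ⟨⟨0, hd0⟩, Finset.mem_univ _⟩
    have hsplit : ∀ S : Finset (Fin d),
        (if S = Finset.univ then v S / d else if S = ∅ then -(v S) / d else 0)
          = (if S = Finset.univ then v S / d else 0) + (if S = ∅ then -(v S) / d else 0) := by
      intro S
      by_cases h1 : S = Finset.univ
      · subst h1; simp [hne]
      · by_cases h2 : S = ∅ <;> simp [h1, h2, Ne.symm hne]
    simp only [hsplit]
    rw [Finset.sum_add_distrib, Finset.sum_ite_eq' Finset.univ, Finset.sum_ite_eq' Finset.univ]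
    simp [sub_div]
    ring
  simp only [Pi.add_apply, Pi.smul_apply, smul_eq_mul]
  rw [hmv, hsumu, hu i, shapley_eq, hconst, Finset.mul_sum, ← Finset.sum_sub_distrib,
    Finset.mul_sum, ← Finset.sum_add_distrib]
  apply Finset.sum_congr rfl
  intro S _
  have hcardu : (Finset.univ : Finset (Fin d)).card = d := by
    rw [Finset.card_univ, Fintype.card_fin]
  have hdd : (d.factorial : ℝ) = d * (d-1).factorial := by
    exact_mod_cast (Nat.mul_factorial_pred (by omega : d ≠ 0)).symm
  have hdne : (d : ℝ) ≠ 0 := by exact_mod_cast hd0.ne'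
  have hfd : (d.factorial : ℝ) ≠ 0 := by exact_mod_cast (Nat.factorial_pos _).ne'
  by_cases h1 : S = Finset.univ
  · subst h1
    simp only [Finset.mem_univ, if_true, hK, ne_eq, not_true_eq_false, and_false, if_false,
      hcardu, Nat.sub_self, Nat.factorial_zero, Nat.cast_one]
    rw [sub_self, mul_zero, zero_add, hdd]
    have hne1 : (((d-1).factorial : ℕ) : ℝ) ≠ 0 := by exact_mod_cast (Nat.factorial_pos _).ne'
    field_simp
  · by_cases h2 : S = ∅
    · subst h2
      simp only [Finset.notMem_empty, if_false, hK, Finset.not_nonempty_empty, false_and,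
        Finset.card_empty, Nat.cast_zero, Nat.factorial_zero, Nat.cast_one, h1]
      simp only [if_true, mul_zero, zero_mul, zero_sub, Nat.sub_zero, sub_self]
      rw [hdd]
      have hne1 : (((d-1).factorial : ℕ) : ℝ) ≠ 0 := by exact_mod_cast (Nat.factorial_pos _).ne'
      field_simp
      ring
    · have hP : S.Nonempty ∧ S ≠ Finset.univ := ⟨Finset.nonempty_iff_ne_empty.mpr h2, h1⟩
      have hc1 : 1 ≤ S.card := Finset.card_pos.mpr hP.1
      have hc2 : S.card < d := by
        have := Finset.card_lt_card (Finset.ssubset_univ_iff.mpr h1)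
        rwa [hcardu] at this
      rw [if_neg h1, if_neg h2, add_zero]
      simp only [hK, if_pos hP]
      by_cases hi : i ∈ S
      · rw [if_pos hi, if_pos hi]
        rw [shapKernel]
        have := arith_mem d S.card hd hc1 hc2
        linear_combination (v S) * this
      · rw [if_neg hi, if_neg hi]
        rw [shapKernel]
        have := arith_nonmem d S.card hd hc1 hc2
        linear_combination (v S) * this
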